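/- (Bruhat filtration for l-spaces.) Let an l-group G act continuously on an l-space X, and let χ : G → ℂˣ be a character. Suppose ∅ = U₀ ⊆ U₁ ⊆ ⋯ ⊆ U_l = X is a chain of open G-invariant subsets such that for every 1 ≤ i ≤ l the locally closed stratum X_i := U_i \ U_{i−1} (with its subspace topology, again an l-space) satisfies D(X_i)^{G,χ} = 0. Then D(X)^{G,χ} = 0. -/

import Mathlib

open scoped Classical

noncomputable section

/-- The space `S(X)` of compactly supported locally constant `ℂ`-valued functions
on a topological space `X`, as a `ℂ`-submodule of `X → ℂ`. -/
def SSp (X : Type*) [TopologicalSpace X] : Submodule ℂ (X → ℂ) where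
  carrier := {f | IsLocallyConstant f ∧ HasCompactSupport f}
  add_mem' := fun hf hg => ⟨hf.1.add hg.1, hf.2.add hg.2⟩
  zero_mem' := ⟨IsLocallyConstant.const 0, by
    simpa using (HasCompactSupport.zero : HasCompactSupport (fun _ : X => (0:ℂ)))⟩
  smul_mem' := fun c f hf =>
    ⟨hf.1.comp fun y => c • y, by simpa [Pi.smul_def, Pi.mul_def] using hf.2.smul_left (f := fun _ : X => c)⟩

/-- The space `D(X) = S(X)*` of distributions on `X`. -/
abbrev Dst (X : Type*) [TopologicalSpace X] := SSp X →ₗ[ℂ] ℂ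

/-- `T ∈ D(X)^{G,χ}`: the distribution `T` on `X` is `(G,χ)`-equivariant for the
action of `G` on `X`, i.e. `g·T = χ(g)·T` where `(g·T)(f) = T(x ↦ f(g·x))`. -/
def IsEqvDist {X : Type*} [TopologicalSpace X] {G : Type*} [SMul G X]
    (χ : G → ℂ) (T : Dst X) : Prop :=
  ∀ (g : G) (f₁ f₂ : SSp X), (∀ x, f₂.1 x = f₁.1 (g • x)) → T f₂ = χ g * T f₁

/-- `T ∈ D(Y)^{G,χ}` for a `G`-invariant subset `Y ⊆ X` (with the subspace topology
and the restricted action): `g·T = χ(g)·T` where `(g·T)(f) = T(y ↦ f(g·y))`. -/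
def IsEqvDistOn {X : Type*} [TopologicalSpace X] {G : Type*} [SMul G X]
    (Y : Set X) (χ : G → ℂ) (T : Dst Y) : Prop :=
  ∀ (g : G) (f₁ f₂ : SSp Y),
    (∀ (x : X) (hx : x ∈ Y) (hgx : g • x ∈ Y), f₂.1 ⟨x, hx⟩ = f₁.1 ⟨g • x, hgx⟩) →
    T f₂ = χ g * T f₁

section Helpers
variable {X : Type*} [TopologicalSpace X]

lemma lc_isClopen_support {f : X → ℂ} (hf : IsLocallyConstant f) :
    IsClopen (Function.support f) := by
  have h : Function.support f = (f ⁻¹' {0})ᶜ := by ext x; simp [Function.mem_support]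
  exact ⟨h ▸ (hf {0}).isClosed_compl, hf {0}ᶜ⟩

lemma lc_tsupport_eq {f : X → ℂ} (hf : IsLocallyConstant f) :
    tsupport f = Function.support f := (lc_isClopen_support hf).1.closure_eq

/-- In a locally compact Hausdorff totally disconnected space, every point of an open
set has a compact clopen neighborhood inside it. -/
lemma exists_compact_clopen [LocallyCompactSpace X] [T2Space X] [TotallyDisconnectedSpace X]
    {x : X} {O : Set X} (hO : IsOpen O) (hx : x ∈ O) :
    ∃ V : Set X, IsClopen V ∧ IsCompact V ∧ x ∈ V ∧ V ⊆ O := by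
  obtain ⟨s, hsc, hxs, hsO⟩ := exists_compact_subset hO hx
  obtain ⟨V, hVclo, hxV, hVs⟩ :=
    (loc_compact_Haus_tot_disc_of_zero_dim (H := X)).mem_nhds_iff.1
      ((isOpen_interior).mem_nhds hxs)
  exact ⟨V, hVclo, hsc.of_isClosed_subset hVclo.1 (hVs.trans interior_subset),
    hxV, (hVs.trans interior_subset).trans hsO⟩

lemma lc_piecewise {W : Set X} (hW : IsClopen W) (c : ℂ) {g : X → ℂ} (hg : IsLocallyConstant g) :
    IsLocallyConstant (fun x => if x ∈ W then c else g x) := by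
  rw [IsLocallyConstant.iff_exists_open]
  intro x
  by_cases hx : x ∈ W
  · exact ⟨W, hW.2, hx, fun y hy => by simp [hy, hx]⟩
  · obtain ⟨U, hUo, hxU, hU⟩ := hg.exists_open x
    exact ⟨U ∩ Wᶜ, hUo.inter hW.1.isOpen_compl, ⟨hxU, hx⟩,
      fun y hy => by rw [if_neg hy.2, if_neg hx, hU y hy.1]⟩

lemma glue_lemma {ι : Type*} (V : ι → Set X) (hVclo : ∀ i, IsClopen (V i)) (c : ι → ℂ)
    (Y : Set X) (f : Y → ℂ)
    (hcompat : ∀ i, ∀ x, ∀ hx : x ∈ Y, x ∈ V i → f ⟨x, hx⟩ = c i) (t : Finset ι) :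
    ∃ F : X → ℂ, IsLocallyConstant F ∧ (∀ x, x ∉ (⋃ i ∈ t, V i) → F x = 0) ∧
      (∀ x, ∀ hx : x ∈ Y, x ∈ (⋃ i ∈ t, V i) → F x = f ⟨x, hx⟩) := by
  classical
  induction t using Finset.induction_on with
  | empty => exact ⟨0, IsLocallyConstant.const 0, fun _ _ => rfl, fun x hx hmem => by
      simp at hmem⟩
  | @insert a s ha ih =>
    obtain ⟨F₀, hF₀lc, hF₀0, hF₀val⟩ := ih
    refine ⟨fun x => if x ∈ V a then c a else F₀ x, lc_piecewise (hVclo a) _ hF₀lc, ?_, ?_⟩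
    · intro x hx
      have hxa : x ∉ V a := fun h => hx (Set.mem_biUnion (Finset.mem_insert_self a s) h)
      simp only []
      rw [if_neg hxa]
      exact hF₀0 x fun h => by
        obtain ⟨i, hi, hxi⟩ := Set.mem_iUnion₂.1 h
        exact hx (Set.mem_biUnion (Finset.mem_insert_of_mem hi) hxi)
    · intro x hx hmem
      simp only []
      by_cases hxa : x ∈ V a
      · rw [if_pos hxa]; exact (hcompat a x hx hxa).symm
      · rw [if_neg hxa]
        obtain ⟨i, hi, hxi⟩ := Set.mem_iUnion₂.1 hmem
        rcases Finset.mem_insert.1 hi with rfl | hi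
        · exact absurd hxi hxa
        · exact hF₀val x hx (Set.mem_biUnion hi hxi)

variable [LocallyCompactSpace X] [T2Space X] [TotallyDisconnectedSpace X]

/-- Extension lemma: a compactly supported locally constant function on the locally
closed set `Uo \ Up` (with `Uo` open) extends to `X`, vanishing outside `Uo`. -/
lemma extension_lemma (Uo Up : Set X) (hUo : IsOpen Uo) (f : SSp ↥(Uo \ Up)) :
    ∃ F : SSp X, (∀ x, x ∉ Uo → F.1 x = 0) ∧
      (∀ x, ∀ hx : x ∈ Uo \ Up, F.1 x = f.1 ⟨x, hx⟩) := by
  classical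
  have hKc : IsCompact (Subtype.val '' tsupport f.1) := f.2.2.image continuous_subtype_val
  have hKY : (Subtype.val '' tsupport f.1) ⊆ Uo \ Up := by rintro x ⟨y, -, rfl⟩; exact y.2
  -- for each point of K choose a compact clopen neighborhood on which f is constant
  have hchoice : ∀ x : (Subtype.val '' tsupport f.1 : Set X),
      ∃ V : Set X, IsClopen V ∧ IsCompact V ∧ (x : X) ∈ V ∧ V ⊆ Uo ∧
      ∀ y, ∀ hy : y ∈ Uo \ Up, y ∈ V → f.1 ⟨y, hy⟩ = f.1 ⟨(x : X), hKY x.2⟩ := by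
    rintro ⟨x, hxK⟩
    have hxY : x ∈ Uo \ Up := hKY hxK
    obtain ⟨U, hUopen, hxU, hUconst⟩ := f.2.1.exists_open ⟨x, hxY⟩
    obtain ⟨W, hWopen, hWU⟩ := isOpen_induced_iff.1 hUopen
    obtain ⟨V, hVclo, hVc, hxV, hVsub⟩ :=
      exists_compact_clopen (hWopen.inter hUo) ⟨by
        have : (⟨x, hxY⟩ : ↥(Uo \ Up)) ∈ Subtype.val ⁻¹' W := hWU ▸ hxU
        exact this, hxY.1⟩
    refine ⟨V, hVclo, hVc, hxV, hVsub.trans Set.inter_subset_right, ?_⟩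
    intro y hy hyV
    exact hUconst ⟨y, hy⟩ (hWU ▸ (Set.mem_preimage.2 (hVsub hyV).1))
  choose V hVclo hVc hVmem hVUo hVconst using hchoice
  -- finite subcover
  have hcover : (Subtype.val '' tsupport f.1 : Set X) ⊆ ⋃ x, V x :=
    fun x hx => Set.mem_iUnion.2 ⟨⟨x, hx⟩, hVmem ⟨x, hx⟩⟩
  obtain ⟨t, ht⟩ := hKc.elim_finite_subcover V (fun x => (hVclo x).2) hcover
  -- glue
  obtain ⟨F, hFlc, hF0, hFval⟩ := glue_lemma V hVclo
    (fun x => f.1 ⟨(x : X), hKY x.2⟩) (Uo \ Up) f.1 (fun i y hy hyV => hVconst i y hy hyV) t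
  have hsupp : Function.support F ⊆ ⋃ i ∈ t, V i := fun x hx => by
    by_contra h; exact hx (hF0 x h)
  have hUnion_c : IsCompact (⋃ i ∈ t, V i) := t.isCompact_biUnion fun i _ => hVc i
  have hFcs : HasCompactSupport F := by
    rw [HasCompactSupport, lc_tsupport_eq hFlc]
    exact hUnion_c.of_isClosed_subset (lc_isClopen_support hFlc).1 hsupp
  refine ⟨⟨F, hFlc, hFcs⟩, ?_, ?_⟩
  · intro x hx
    exact hF0 x fun h => by
      obtain ⟨i, -, hxi⟩ := Set.mem_iUnion₂.1 h
      exact hx (hVUo i hxi)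
  · intro x hx
    show F x = f.1 ⟨x, hx⟩
    by_cases hxU : x ∈ ⋃ i ∈ t, V i
    · exact hFval x hx hxU
    · have hx0 : F x = 0 := hF0 x hxU
      have hf0 : f.1 ⟨x, hx⟩ = 0 := by
        by_contra h
        have hts : (⟨x, hx⟩ : ↥(Uo \ Up)) ∈ tsupport f.1 := subset_closure h
        exact hxU (ht ⟨(⟨x, hx⟩ : ↥(Uo \ Up)), hts, rfl⟩)
      rw [hx0, hf0]

end Helpers

/-- Bruhat filtration for l-spaces: if an l-group `G` acts continuously on
an l-space `X` stratified by a chain of open `G`-invariant subsets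
`∅ = U₀ ⊆ U₁ ⊆ ⋯ ⊆ U_l = X` such that each stratum `Xᵢ = Uᵢ \ Uᵢ₋₁` satisfies
`D(Xᵢ)^{G,χ} = 0`, then `D(X)^{G,χ} = 0`. -/
theorem stmt3
    (G : Type*) [Group G] [TopologicalSpace G] [IsTopologicalGroup G]
    [LocallyCompactSpace G] [T2Space G] [TotallyDisconnectedSpace G]
    (X : Type*) [TopologicalSpace X] [LocallyCompactSpace X] [T2Space X]
    [TotallyDisconnectedSpace X]
    [MulAction G X] [ContinuousSMul G X]
    (χ : G →* ℂˣ)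
    (l : ℕ) (U : Fin (l + 1) → Set X)
    (hUopen : ∀ i, IsOpen (U i)) (hUmono : Monotone U)
    (hU0 : U 0 = ∅) (hUl : U (Fin.last l) = Set.univ)
    (hUinv : ∀ (i : Fin (l + 1)) (g : G) (x : X), x ∈ U i → g • x ∈ U i)
    (hstrata : ∀ i : Fin l, ∀ T : Dst ↥(U i.succ \ U i.castSucc),
      IsEqvDistOn (U i.succ \ U i.castSucc) (fun g => (χ g : ℂ)) T → T = 0)
    (T : Dst X) (hT : IsEqvDist (fun g => (χ g : ℂ)) T) : T = 0 := by
  classical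
  have key : ∀ i : ℕ, ∀ hi : i ≤ l, ∀ F : SSp X,
      (∀ x, x ∉ U ⟨i, Nat.lt_succ_of_le hi⟩ → F.1 x = 0) → T F = 0 := by
    intro i
    induction i with
    | zero =>
      intro hi F hF
      have hF0 : F = 0 := Subtype.ext (funext fun x => hF x (by
        show x ∉ U 0
        rw [hU0]; exact Set.notMem_empty x))
      rw [hF0, map_zero]
    | succ i ih =>
      intro hi F hF
      have hil : i < l := hi
      have IH : ∀ F : SSp X, (∀ x, x ∉ U ((⟨i, hil⟩ : Fin l).castSucc) → F.1 x = 0) →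
          T F = 0 := fun F hF => ih (le_of_lt hil) F hF
      -- key vanishing principle: T only depends on values outside U i.castSucc
      have Tdep : ∀ A B : SSp X,
          (∀ x, x ∉ U ((⟨i, hil⟩ : Fin l).castSucc) → A.1 x = B.1 x) → T A = T B := by
        intro A B hAB
        have h0 : T (A - B) = 0 := IH (A - B) (fun x hx => by
          have : (A - B).1 x = A.1 x - B.1 x := rfl
          rw [this, hAB x hx, sub_self])
        rw [map_sub] at h0
        exact sub_eq_zero.mp h0
      -- translation of a test function by g stays in S(X)
      have smulmem : ∀ (g : G) (A : SSp X), (fun x => A.1 (g • x)) ∈ SSp X := by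
        intro g A
        have hlc : IsLocallyConstant fun x => A.1 (g • x) :=
          A.2.1.comp_continuous (continuous_const_smul g)
        refine ⟨hlc, ?_⟩
        have hsupp : Function.support (fun x => A.1 (g • x)) =
            (fun y => g⁻¹ • y) '' Function.support A.1 := by
          ext x
          constructor
          · intro hx
            exact ⟨g • x, hx, by simp⟩
          · rintro ⟨y, hy, rfl⟩
            simpa [smul_inv_smul] using hy
        rw [HasCompactSupport, lc_tsupport_eq hlc, hsupp]
        have hAc : IsCompact (Function.support A.1) :=
          A.2.2.of_isClosed_subset (lc_isClopen_support A.2.1).1 subset_closure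
        exact hAc.image (continuous_const_smul g⁻¹)
      -- the stratum
      set Y : Set X := U (⟨i, hil⟩ : Fin l).succ \ U ((⟨i, hil⟩ : Fin l).castSucc) with hYdef
      have hYg : ∀ (g : G) (x : X), x ∈ Y → g • x ∈ Y := by
        intro g x hx
        refine ⟨hUinv _ g x hx.1, fun h => hx.2 ?_⟩
        have h2 := hUinv _ g⁻¹ _ h
        rwa [inv_smul_smul] at h2
      -- the extension operator from the stratum
      choose ext hext0 hextval using fun f : SSp ↥(U (⟨i, hil⟩ : Fin l).succ \ U ((⟨i, hil⟩ : Fin l).castSucc)) =>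
        extension_lemma (U (⟨i, hil⟩ : Fin l).succ) (U ((⟨i, hil⟩ : Fin l).castSucc))
          (hUopen _) f
      -- the induced distribution on the stratum
      let Ti : Dst ↥Y :=
        { toFun := fun f => T (ext f)
          map_add' := fun f g => by
            show T (ext (f + g)) = T (ext f) + T (ext g)
            rw [← map_add]
            apply Tdep
            intro x hx
            have hco : (ext f + ext g).1 x = (ext f).1 x + (ext g).1 x := rfl
            by_cases hxs : x ∈ U (⟨i, hil⟩ : Fin l).succ
            · have hxY : x ∈ Y := ⟨hxs, hx⟩
              rw [hextval (f + g) x hxY, hco, hextval f x hxY, hextval g x hxY]; rfl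
            · rw [hext0 (f + g) x hxs, hco, hext0 f x hxs, hext0 g x hxs, add_zero]
          map_smul' := fun c f => by
            show T (ext (c • f)) = c • T (ext f)
            rw [← map_smul]
            apply Tdep
            intro x hx
            have hco : (c • ext f).1 x = c • (ext f).1 x := rfl
            by_cases hxs : x ∈ U (⟨i, hil⟩ : Fin l).succ
            · have hxY : x ∈ Y := ⟨hxs, hx⟩
              rw [hextval (c • f) x hxY, hco, hextval f x hxY]; rfl
            · rw [hext0 (c • f) x hxs, hco, hext0 f x hxs, smul_zero] }
      have hTieqv : IsEqvDistOn Y (fun g => (χ g : ℂ)) Ti := by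
        intro g f₁ f₂ hff
        show T (ext f₂) = (χ g : ℂ) * T (ext f₁)
        set F₂ : SSp X := ⟨fun x => (ext f₁).1 (g • x), smulmem g (ext f₁)⟩ with hF₂
        have h1 : T F₂ = (χ g : ℂ) * T (ext f₁) := hT g (ext f₁) F₂ (fun x => rfl)
        have h2 : T (ext f₂) = T F₂ := by
          apply Tdep
          intro x hx
          have hco : F₂.1 x = (ext f₁).1 (g • x) := rfl
          by_cases hxs : x ∈ U (⟨i, hil⟩ : Fin l).succ
          · have hxY : x ∈ Y := ⟨hxs, hx⟩
            have hgY : g • x ∈ Y := hYg g x hxY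
            rw [hextval f₂ x hxY, hco, hextval f₁ (g • x) hgY]
            exact hff x hxY hgY
          · rw [hext0 f₂ x hxs, hco, hext0 f₁ (g • x) (fun h => hxs (by
              have h2 := hUinv _ g⁻¹ _ h
              rwa [inv_smul_smul] at h2))]
        rw [h2, h1]
      have hTi0 : Ti = 0 := hstrata ⟨i, hil⟩ Ti hTieqv
      -- restrict F to the stratum
      have hFsupp : Function.support F.1 ⊆ U (⟨i, hil⟩ : Fin l).succ := by
        intro x hx
        by_contra h
        exact hx (hF x h)
      have hflc : IsLocallyConstant (fun y : Y => F.1 y) :=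
        F.2.1.comp_continuous continuous_subtype_val
      have hfcs : HasCompactSupport (fun y : Y => F.1 y) := by
        rw [HasCompactSupport, lc_tsupport_eq hflc, Subtype.isCompact_iff]
        have himg : Subtype.val '' Function.support (fun y : Y => F.1 y) =
            Function.support F.1 ∩ (U ((⟨i, hil⟩ : Fin l).castSucc))ᶜ := by
          ext x
          constructor
          · rintro ⟨y, hy, rfl⟩
            exact ⟨hy, y.2.2⟩
          · rintro ⟨hx1, hx2⟩
            exact ⟨⟨x, hFsupp hx1, hx2⟩, hx1, rfl⟩
        rw [himg]
        have hFc : IsCompact (Function.support F.1) :=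
          F.2.2.of_isClosed_subset (lc_isClopen_support F.2.1).1 subset_closure
        exact hFc.of_isClosed_subset
          ((lc_isClopen_support F.2.1).1.inter (hUopen _).isClosed_compl)
          Set.inter_subset_left
      set f : SSp ↥Y := ⟨fun y : Y => F.1 y, hflc, hfcs⟩ with hfdef
      have hTf : T (ext f) = 0 := by
        have h0 : Ti f = 0 := by rw [hTi0]; rfl
        exact h0
      have hTF : T F = T (ext f) := by
        apply Tdep
        intro x hx
        by_cases hxs : x ∈ U (⟨i, hil⟩ : Fin l).succ
        · have hxY : x ∈ Y := ⟨hxs, hx⟩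
          rw [hextval f x hxY]
        · rw [hF x hxs, hext0 f x hxs]
      rw [hTF, hTf]
  apply LinearMap.ext
  intro F
  have := key l le_rfl F (fun x hx => absurd (by rw [show U ⟨l, Nat.lt_succ_of_le le_rfl⟩ = Set.univ from hUl]; exact Set.mem_univ x) hx)
  simpa using this
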